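/- arXiv:1002.4095 — 4 statements merged into one kernel-verified Lean document; each statement's English description precedes it below -/
import Mathlib

section
/- Let A be a dilation matrix with smallest singular value μ > 2, and let F = [-1/2, 1/2)^n. Then the set D = A(F) ∩ ℤ^n is a complete set of coset representatives of ℤ^n / A(ℤ^n). -/
open MeasureTheory Set

/-- `A` is a dilation matrix: an integer matrix all of whose complex
eigenvalues have absolute value greater than 1. -/
def IsDilation {n : ℕ} (A : Matrix (Fin n) (Fin n) ℤ) : Prop :=
  ∀ μ ∈ spectrum ℂ (A.map (Int.cast : ℤ → ℂ)), 1 < ‖μ‖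

/-- `D` is a complete set of coset representatives of `ℤ^n / A(ℤ^n)`. -/
def IsDigitSet {n : ℕ} (A : Matrix (Fin n) (Fin n) ℤ) (D : Set (Fin n → ℤ)) : Prop :=
  ∀ x : Fin n → ℤ, ∃! d : Fin n → ℤ, d ∈ D ∧ ∃ y : Fin n → ℤ, x = A.mulVec y + d

/-- The real matrix corresponding to an integer matrix. -/
noncomputable def realMat {n : ℕ} (A : Matrix (Fin n) (Fin n) ℤ) :
    Matrix (Fin n) (Fin n) ℝ :=
  A.map (Int.cast : ℤ → ℝ)

/-- Cast an integer vector to a real vector. -/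
def castVec {n : ℕ} (d : Fin n → ℤ) : Fin n → ℝ := fun i => (d i : ℝ)

/-- The self-affine set `T(A,D) = { Σ_{j=1}^∞ A^{-j} d_j : d_j ∈ D }`. -/
noncomputable def Tile {n : ℕ} (A : Matrix (Fin n) (Fin n) ℤ) (D : Set (Fin n → ℤ)) :
    Set (Fin n → ℝ) :=
  { x | ∃ f : ℕ → (Fin n → ℤ), (∀ j, f j ∈ D) ∧
      HasSum (fun j => ((realMat A)⁻¹ ^ (j + 1)).mulVec (castVec (f j))) x }

/-- `A` yields a radix representation with digit set `D`: every integer vector is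
a finite sum `Σ_{j=0}^N A^j d_j` with digits in `D`. -/
def YieldsRadix {n : ℕ} (A : Matrix (Fin n) (Fin n) ℤ) (D : Set (Fin n → ℤ)) : Prop :=
  ∀ x : Fin n → ℤ, ∃ N : ℕ, ∃ d : ℕ → (Fin n → ℤ), (∀ j ≤ N, d j ∈ D) ∧
    x = ∑ j ∈ Finset.range (N + 1), (A ^ j).mulVec (d j)

/-- The canonical fundamental domain `F = [-1/2, 1/2)^n`. -/
def Fdom (n : ℕ) : Set (Fin n → ℝ) :=
  Set.univ.pi fun _ => Set.Ico (-(1/2) : ℝ) (1/2)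

/-- The digit set `A(F) ∩ ℤ^n`, viewed as a set of integer vectors. -/
noncomputable def digitF {n : ℕ} (A : Matrix (Fin n) (Fin n) ℤ) : Set (Fin n → ℤ) :=
  { d : Fin n → ℤ | castVec d ∈ (fun v => (realMat A).mulVec v) '' Fdom n }

/-- Multiplication of a Euclidean-space vector by a real matrix,
landing in Euclidean space (so that norms are the `ℓ²` norms). -/
noncomputable def mulVecE {n : ℕ} (B : Matrix (Fin n) (Fin n) ℝ)
    (v : EuclideanSpace ℝ (Fin n)) : EuclideanSpace ℝ (Fin n) :=
  (WithLp.equiv 2 (Fin n → ℝ)).symm (B.mulVec ((WithLp.equiv 2 (Fin n → ℝ)) v))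

/-- The smallest singular value of `A` is greater than `c`: equivalently,
`‖Av‖ > c` for every unit vector `v` (Euclidean norm). -/
noncomputable def MinSingValGT {n : ℕ} (A : Matrix (Fin n) (Fin n) ℤ) (c : ℝ) : Prop :=
  ∀ v : EuclideanSpace ℝ (Fin n), ‖v‖ = 1 → c < ‖mulVecE (realMat A) v‖

/-- Vectors expressible by a radix expansion of length at most `k`. -/
def DAk {n : ℕ} (A : Matrix (Fin n) (Fin n) ℤ) (D : Set (Fin n → ℤ)) (k : ℕ) :
    Set (Fin n → ℤ) :=
  { x : Fin n → ℤ | ∃ d : ℕ → (Fin n → ℤ), (∀ j < k, d j ∈ D) ∧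
      x = ∑ j ∈ Finset.range k, (A ^ j).mulVec (d j) }

/-- `T` tiles `ℝ^n` under translation by `ℤ^n`. -/
def TilesRn {n : ℕ} (T : Set (Fin n → ℝ)) : Prop :=
  (⋃ k : Fin n → ℤ, (fun x => x + castVec k) '' T) = Set.univ ∧
  ∀ k₁ k₂ : Fin n → ℤ, k₁ ≠ k₂ →
    volume (((fun x => x + castVec k₁) '' T) ∩ ((fun x => x + castVec k₂) '' T)) = 0
lemma castVec_mulVec {n : ℕ} (A : Matrix (Fin n) (Fin n) ℤ) (y : Fin n → ℤ) :
    castVec (A.mulVec y) = (realMat A).mulVec (castVec y) := by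
  funext i
  simp [Matrix.mulVec, dotProduct, castVec, realMat, Matrix.map_apply]

lemma detne {n : ℕ} (A : Matrix (Fin n) (Fin n) ℤ) (hA : IsDilation A) :
    (realMat A).det ≠ 0 := by
  intro h
  have hdet : (A.det : ℝ) = 0 := by
    rw [show ((A.det : ℤ) : ℝ) = ((Int.castRingHom ℝ) A.det) from rfl,
      RingHom.map_det] at *
    exact h
  have hz : A.det = 0 := by exact_mod_cast hdet
  have hcdet : (A.map (Int.cast : ℤ → ℂ)).det = 0 := by
    rw [show A.map (Int.cast : ℤ → ℂ) = (Int.castRingHom ℂ).mapMatrix A from rfl,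
      ← RingHom.map_det, hz]; simp
  have : ¬ IsUnit (A.map (Int.cast : ℤ → ℂ)) := by
    rw [Matrix.isUnit_iff_isUnit_det, hcdet]; simp
  have h0 := hA 0 (((spectrum.zero_mem_iff (R := ℂ)).mpr this))
  norm_num at h0

lemma mulVec_inj {n : ℕ} (A : Matrix (Fin n) (Fin n) ℤ) (hA : IsDilation A)
    {a b : Fin n → ℝ} (h : (realMat A).mulVec a = (realMat A).mulVec b) : a = b := by
  have hd := detne A hA
  have := congrArg ((realMat A)⁻¹.mulVec) h
  rwa [Matrix.mulVec_mulVec, Matrix.mulVec_mulVec,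
    Matrix.nonsing_inv_mul _ (isUnit_iff_ne_zero.mpr hd), Matrix.one_mulVec, Matrix.one_mulVec] at this

lemma castVec_inj {n : ℕ} {a b : Fin n → ℤ} (h : castVec a = castVec b) : a = b := by
  funext i
  have h' := congrFun h i
  simp only [castVec] at h'
  exact_mod_cast h'

/-- if the smallest singular value exceeds 2, then
`D = A(F) ∩ ℤ^n` is a complete set of coset representatives of `ℤ^n / A(ℤ^n)`. -/
theorem stmt_3 {n : ℕ} (A : Matrix (Fin n) (Fin n) ℤ)
    (hA : IsDilation A) (hμ : MinSingValGT A 2) :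
    IsDigitSet A (digitF A) := by
  intro x
  have hd := detne A hA
  set B := realMat A with hB
  set t : Fin n → ℝ := B⁻¹.mulVec (castVec x) with ht
  have hBt : B.mulVec t = castVec x := by
    rw [ht, Matrix.mulVec_mulVec, Matrix.mul_nonsing_inv _ (isUnit_iff_ne_zero.mpr hd), Matrix.one_mulVec]
  set y : Fin n → ℤ := fun i => ⌊t i + 1/2⌋ with hy
  set u : Fin n → ℝ := t - castVec y with hu
  have hufd : u ∈ Fdom n := by
    intro i _
    constructor
    · have := Int.floor_le (t i + 1/2)
      simp only [hu, Pi.sub_apply, castVec, hy]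
      linarith
    · have := Int.lt_floor_add_one (t i + 1/2)
      simp only [hu, Pi.sub_apply, castVec, hy]
      linarith
  set d : Fin n → ℤ := x - A.mulVec y with hdd
  have hcast : castVec d = B.mulVec u := by
    have h1 : B.mulVec u = B.mulVec t - B.mulVec (castVec y) := by
      rw [hu, Matrix.mulVec_sub]
    rw [h1, hBt, ← castVec_mulVec]
    funext i
    simp only [castVec, hdd, Pi.sub_apply]
    push_cast
    ring
  refine ⟨d, ⟨⟨u, hufd, hcast.symm⟩, y, by simp [hdd]⟩, ?_⟩
  rintro d' ⟨⟨u', hu'fd, hu'⟩, y', hxy'⟩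
  replace hu' : B.mulVec u' = castVec d' := hu'
  -- show d' = d
  have key : B.mulVec (u' + castVec y') = B.mulVec (u + castVec y) := by
    rw [Matrix.mulVec_add, Matrix.mulVec_add, hu', ← hcast, ← castVec_mulVec,
      ← castVec_mulVec]
    funext i
    have h1 := congrFun hxy' i
    have h2 := congrFun (by simp [hdd] : A.mulVec y + d = x) i
    simp only [Pi.add_apply, castVec] at *
    rw [show d' i = x i - A.mulVec y' i by omega, show d i = x i - A.mulVec y i by omega]
    push_cast
    ring
  have huy : u' + castVec y' = u + castVec y := mulVec_inj A hA key
  have hyy : y' = y := by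
    funext i
    have h1 := hu'fd i (mem_univ i)
    have h2 := hufd i (mem_univ i)
    have h3 := congrFun huy i
    simp only [Pi.add_apply, castVec, mem_Ico] at h1 h2 h3
    have l1 : y' i - y i < 1 := by
      exact_mod_cast (show ((y' i - y i : ℤ) : ℝ) < 1 by push_cast; linarith [h1.1, h2.2])
    have l2 : (-1 : ℤ) < y' i - y i := by
      exact_mod_cast (show (-1 : ℝ) < ((y' i - y i : ℤ) : ℝ) by push_cast; linarith [h1.2, h2.1])
    omega
  rw [hyy] at huy
  have huu : u' = u := by
    funext i
    have h3 := congrFun huy i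
    simp only [Pi.add_apply] at h3
    linarith
  apply castVec_inj
  rw [← hu', hcast, huu]
end

section
/- Let A be a dilation matrix and D a digit set for A containing 0. If T = T(A,D) tiles ℝ^n under translation by ℤ^n and 0 is in the interior of T, then A yields a radix representation of ℤ^n with digit set D. -/
open MeasureTheory Set

/-! ### Auxiliary lemmas -/

open Filter Matrix Metric

attribute [local instance] Matrix.linftyOpNormedRing Matrix.linftyOpNormedAlgebra

namespace Radix13

variable {n : ℕ}

/-- The complexification of `A`. -/
noncomputable def cMat (A : Matrix (Fin n) (Fin n) ℤ) : Matrix (Fin n) (Fin n) ℂ :=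
  A.map (Int.cast : ℤ → ℂ)

lemma cMat_eq_map (A : Matrix (Fin n) (Fin n) ℤ) :
    cMat A = (realMat A).map (Complex.ofRealHom) := by
  ext i j; simp [cMat, realMat]

lemma isUnit_cMat {A : Matrix (Fin n) (Fin n) ℤ} (hA : IsDilation A) : IsUnit (cMat A) := by
  by_contra h
  have h0 : (0 : ℂ) ∈ spectrum ℂ (cMat A) := (spectrum.zero_mem_iff ℂ).mpr h
  have h1 := hA 0 h0
  rw [norm_zero] at h1
  linarith

lemma det_realMat_ne_zero {A : Matrix (Fin n) (Fin n) ℤ} (hA : IsDilation A) :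
    (realMat A).det ≠ 0 := by
  have h := (Matrix.isUnit_iff_isUnit_det _).mp (isUnit_cMat hA)
  rw [cMat_eq_map] at h
  rw [← RingHom.mapMatrix_apply, ← RingHom.map_det] at h
  intro hd
  rw [hd] at h
  simp at h

lemma mul_inv_realMat {A : Matrix (Fin n) (Fin n) ℤ} (hA : IsDilation A) :
    realMat A * (realMat A)⁻¹ = 1 :=
  Matrix.mul_nonsing_inv _ (isUnit_iff_ne_zero.mpr (det_realMat_ne_zero hA))

lemma inv_mul_realMat {A : Matrix (Fin n) (Fin n) ℤ} (hA : IsDilation A) :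
    (realMat A)⁻¹ * realMat A = 1 :=
  Matrix.nonsing_inv_mul _ (isUnit_iff_ne_zero.mpr (det_realMat_ne_zero hA))

lemma map_inv_realMat {A : Matrix (Fin n) (Fin n) ℤ} (hA : IsDilation A) :
    ((realMat A)⁻¹).map (Complex.ofRealHom) = (cMat A)⁻¹ := by
  symm
  apply Matrix.inv_eq_right_inv
  rw [cMat_eq_map, ← RingHom.mapMatrix_apply, ← RingHom.mapMatrix_apply,
    ← _root_.map_mul, mul_inv_realMat hA, _root_.map_one]

lemma spectralRadius_inv_lt_one {A : Matrix (Fin n) (Fin n) ℤ} (hA : IsDilation A) :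
    spectralRadius ℂ ((cMat A)⁻¹) < 1 := by
  have hmem : ∀ μ ∈ spectrum ℂ ((cMat A)⁻¹), ‖μ‖₊ < 1 := by
    intro μ hμ
    set u := (isUnit_cMat hA).unit with hu
    have hcu : (cMat A)⁻¹ = ↑u⁻¹ := by
      rw [Matrix.coe_units_inv, IsUnit.unit_spec]
    rw [hcu] at hμ
    have hμ0 : μ ≠ 0 := by
      rintro rfl
      exact ((spectrum.zero_mem_iff ℂ).mp hμ) u⁻¹.isUnit
    have hμ' : ((Units.mk0 μ hμ0 : ℂˣ) : ℂ) ∈ spectrum ℂ ((u⁻¹ : (Matrix (Fin n) (Fin n) ℂ)ˣ) : Matrix (Fin n) (Fin n) ℂ) := hμ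
    have h2 := spectrum.inv_mem_iff.mp hμ'
    rw [inv_inv] at h2
    have h2' : μ⁻¹ ∈ spectrum ℂ (cMat A) := by
      have : ((Units.mk0 μ hμ0)⁻¹ : ℂˣ).val = μ⁻¹ := by simp
      rw [this] at h2
      rwa [IsUnit.unit_spec] at h2
    have h1 : 1 < ‖μ⁻¹‖ := hA _ h2' 
    rw [norm_inv] at h1
    have habs : ‖μ‖ < 1 := by
      rcases lt_or_ge (‖μ‖) 1 with h | h
      · exact h
      · exfalso
        have : ‖μ‖ ≠ 0 := norm_ne_zero_iff.mpr hμ0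
        have := (one_lt_inv₀ (lt_of_lt_of_le one_pos h)).mp h1  -- guess
        linarith
    rw [← NNReal.coe_lt_coe, coe_nnnorm, NNReal.coe_one]; exact habs
  rcases Set.eq_empty_or_nonempty (spectrum ℂ ((cMat A)⁻¹)) with h | h
  · simp [spectralRadius, h]
  · exact_mod_cast spectrum.spectralRadius_lt_of_forall_lt_of_nonempty h hmem


/-- The key norm estimate: powers of the inverse decay geometrically. -/
lemma nnnorm_map_ofReal (X : Matrix (Fin n) (Fin n) ℝ) :
    ‖X.map (Complex.ofRealHom)‖₊ = ‖X‖₊ := by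
  simp [Matrix.linfty_opNNNorm_def, Matrix.map_apply]

open Filter in
lemma exists_pow_inv_bound {A : Matrix (Fin n) (Fin n) ℤ} (hA : IsDilation A) :
    ∃ C ρ : ℝ, 0 < C ∧ 0 < ρ ∧ ρ < 1 ∧ 1 ≤ C ∧
      ∀ k : ℕ, ‖(realMat A)⁻¹ ^ k‖ ≤ C * ρ ^ k := by
  haveI : CompleteSpace (Matrix (Fin n) (Fin n) ℂ) := FiniteDimensional.complete ℂ _
  set Mi := (cMat A)⁻¹ with hMi
  have hnorm : ∀ k : ℕ, ‖(realMat A)⁻¹ ^ k‖ = ‖Mi ^ k‖ := by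
    intro k
    have h1 : Mi ^ k = ((realMat A)⁻¹ ^ k).map Complex.ofRealHom := by
      rw [hMi, ← map_inv_realMat hA]
      show _ = Complex.ofRealHom.mapMatrix ((realMat A)⁻¹ ^ k)
      rw [map_pow]
      rfl
    rw [h1, ← coe_nnnorm, ← coe_nnnorm, nnnorm_map_ofReal]
  obtain ⟨c, hc1, hc2⟩ := ENNReal.lt_iff_exists_nnreal_btwn.mp (spectralRadius_inv_lt_one hA)
  have hc0 : 0 < c := ENNReal.coe_pos.mp (zero_le.trans_lt hc1)
  have hc1R : (c : ℝ) < 1 := by exact_mod_cast hc2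
  have hGel := spectrum.pow_nnnorm_pow_one_div_tendsto_nhds_spectralRadius Mi
  have hev : ∀ᶠ k : ℕ in atTop, (‖Mi ^ k‖₊ : ENNReal) ^ (1/(k:ℝ)) < (c : ENNReal) :=
    hGel.eventually_lt_const hc1
  obtain ⟨N, hN⟩ := eventually_atTop.mp hev
  set K := max N 1 with hK
  have hkb : ∀ k : ℕ, K ≤ k → ‖Mi ^ k‖ ≤ (c:ℝ) ^ k := by
    intro k hk
    have hk1 : 1 ≤ k := le_trans (le_max_right _ _) hk
    have h := hN k (le_trans (le_max_left _ _) hk)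
    have hkne : (1/(k:ℝ)) * k = 1 := by
      field_simp
    set x := ‖Mi ^ k‖₊ with hx
    have hcoe : ((x : ENNReal) ^ (1/(k:ℝ))) = ((x ^ (1/(k:ℝ)) : NNReal) : ENNReal) :=
      (ENNReal.coe_rpow_of_nonneg x (by positivity)).symm
    rw [hcoe, ENNReal.coe_lt_coe] at h
    have h2 : (x ^ (1/(k:ℝ))) ^ (k:ℝ) ≤ c ^ (k:ℝ) :=
      NNReal.rpow_le_rpow h.le (by positivity)
    rw [← NNReal.rpow_mul, hkne, NNReal.rpow_one, NNReal.rpow_natCast] at h2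
    calc ‖Mi ^ k‖ = (x : ℝ) := rfl
    _ ≤ ((c ^ k : NNReal) : ℝ) := by exact_mod_cast h2
    _ = (c:ℝ) ^ k := by push_cast; ring
  set C : ℝ := 1 + ∑ j ∈ Finset.range K, ‖Mi ^ j‖ / (c:ℝ) ^ j with hC
  have hsum_nonneg : (0:ℝ) ≤ ∑ j ∈ Finset.range K, ‖Mi ^ j‖ / (c:ℝ) ^ j :=
    Finset.sum_nonneg fun j _ => by positivity
  have hC1 : 1 ≤ C := by simp only [hC]; linarith
  refine ⟨C, c, by linarith, by exact_mod_cast hc0, hc1R, hC1, fun k => ?_⟩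
  rw [hnorm]
  rcases lt_or_ge k K with h | h
  · have hterm : ‖Mi ^ k‖ / (c:ℝ) ^ k ≤ ∑ j ∈ Finset.range K, ‖Mi ^ j‖ / (c:ℝ) ^ j :=
      Finset.single_le_sum (f := fun j => ‖Mi ^ j‖ / (c:ℝ) ^ j)
        (fun j _ => by positivity) (Finset.mem_range.mpr h)
    have hck : (0:ℝ) < (c:ℝ) ^ k := by positivity
    calc ‖Mi ^ k‖ = (‖Mi ^ k‖ / (c:ℝ) ^ k) * (c:ℝ) ^ k := by field_simp
    _ ≤ (∑ j ∈ Finset.range K, ‖Mi ^ j‖ / (c:ℝ) ^ j) * (c:ℝ) ^ k := by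
        apply mul_le_mul_of_nonneg_right hterm hck.le
    _ ≤ C * (c:ℝ) ^ k := by
        apply mul_le_mul_of_nonneg_right _ hck.le
        simp only [hC]; linarith
  · calc ‖Mi ^ k‖ ≤ (c:ℝ) ^ k := hkb k h
    _ ≤ C * (c:ℝ) ^ k := by nlinarith [pow_pos (show (0:ℝ) < c by exact_mod_cast hc0) k]


lemma castVec_mulVec (A : Matrix (Fin n) (Fin n) ℤ) (v : Fin n → ℤ) :
    castVec (A.mulVec v) = (realMat A).mulVec (castVec v) := by
  funext i
  simp only [castVec, realMat, Matrix.mulVec, dotProduct, Matrix.map_apply]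
  push_cast
  rfl

lemma castVec_pow_mulVec (A : Matrix (Fin n) (Fin n) ℤ) (k : ℕ) (v : Fin n → ℤ) :
    castVec ((A ^ k).mulVec v) = ((realMat A) ^ k).mulVec (castVec v) := by
  have h : realMat (A ^ k) = (realMat A) ^ k := by
    show (Int.castRingHom ℝ).mapMatrix (A ^ k) = _
    rw [map_pow]
    rfl
  rw [← h]
  exact castVec_mulVec (A ^ k) v

lemma castVec_add (v w : Fin n → ℤ) : castVec (v + w) = castVec v + castVec w := by
  funext i; simp [castVec]

lemma castVec_sub (v w : Fin n → ℤ) : castVec (v - w) = castVec v - castVec w := by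
  funext i; simp [castVec]

lemma castVec_zero : castVec (0 : Fin n → ℤ) = 0 := by funext i; simp [castVec]

lemma castVec_inj {v w : Fin n → ℤ} (h : castVec v = castVec w) : v = w := by
  funext i
  have := congrFun h i
  simp only [castVec] at this
  exact_mod_cast this

lemma castVec_sum (s : Finset ℕ) (g : ℕ → Fin n → ℤ) :
    castVec (∑ j ∈ s, g j) = ∑ j ∈ s, castVec (g j) := by
  funext i
  simp [castVec]

/-- `D` is finite. -/
lemma digitSet_finite {A : Matrix (Fin n) (Fin n) ℤ} {D : Set (Fin n → ℤ)}
    (hA : IsDilation A) (hD : IsDigitSet A D) : D.Finite := by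
  classical
  set B := (realMat A)⁻¹ with hB
  set g : (Fin n → ℤ) → (Fin n → ℤ) := fun d =>
    d - A.mulVec (fun i => ⌊B.mulVec (castVec d) i + 1/2⌋) with hg
  set K : ℝ := ‖realMat A‖ * (1/2) with hKdef
  have hb : ∀ d : Fin n → ℤ, ‖castVec (g d)‖ ≤ K := by
    intro d
    set x := B.mulVec (castVec d) with hx
    set y : Fin n → ℤ := fun i => ⌊x i + 1/2⌋ with hy
    have h1 : castVec (g d) = (realMat A).mulVec (x - castVec y) := by
      rw [hg]
      simp only
      rw [castVec_sub, castVec_mulVec, Matrix.mulVec_sub]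
      congr 1
      rw [hx, Matrix.mulVec_mulVec, hB, mul_inv_realMat hA, Matrix.one_mulVec]
    have h2 : ‖x - castVec y‖ ≤ 1/2 := by
      apply pi_norm_le_iff_of_nonneg (by norm_num : (0:ℝ) ≤ 1/2) |>.mpr
      intro i
      have hfl := Int.floor_le (x i + 1/2)
      have hfl2 := Int.lt_floor_add_one (x i + 1/2)
      simp only [Pi.sub_apply, castVec, hy, Real.norm_eq_abs]
      rw [abs_le]
      constructor <;> [linarith; linarith]
    rw [h1]
    calc ‖(realMat A).mulVec (x - castVec y)‖ ≤ ‖realMat A‖ * ‖x - castVec y‖ :=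
          Matrix.linfty_opNorm_mulVec _ _
    _ ≤ K := by
        rw [hKdef]
        exact mul_le_mul_of_nonneg_left h2 (norm_nonneg _)
  have hinj : Set.InjOn g D := by
    intro d hd d' hd' heq
    obtain ⟨dd, hdd, huniq⟩ := hD d
    have h1 : d = dd := huniq d ⟨hd, 0, by simp⟩
    have h2 : d' = dd := by
      apply huniq d'
      refine ⟨hd', (fun i => ⌊B.mulVec (castVec d) i + 1/2⌋) -
        (fun i => ⌊B.mulVec (castVec d') i + 1/2⌋), ?_⟩
      have h3 : d - A.mulVec (fun i => ⌊B.mulVec (castVec d) i + 1/2⌋)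
          = d' - A.mulVec (fun i => ⌊B.mulVec (castVec d') i + 1/2⌋) := heq
      rw [Matrix.mulVec_sub]
      set u := A.mulVec (fun i => ⌊B.mulVec (castVec d) i + 1/2⌋) with hu
      set u' := A.mulVec (fun i => ⌊B.mulVec (castVec d') i + 1/2⌋) with hu'
      have h4 : d = d' - u' + u := by rw [← h3]; abel
      rw [h4]
      abel
    rw [h1, h2]
  apply Set.Finite.of_finite_image _ hinj
  apply Set.Finite.subset (Set.finite_Icc (fun _ : Fin n => -⌈K⌉) (fun _ => ⌈K⌉))
  rintro _ ⟨d, _, rfl⟩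
  have hbd := hb d
  constructor <;> intro i <;>
  · have hi : ‖castVec (g d) i‖ ≤ K := (norm_le_pi_norm (castVec (g d)) i).trans hbd
    simp only [castVec, Real.norm_eq_abs, abs_le] at hi
    have hceil := Int.le_ceil K
    have : ((g d) i : ℝ) ≤ (⌈K⌉ : ℝ) := le_trans hi.2 hceil
    have h' : (-(⌈K⌉:ℤ) : ℝ) ≤ ((g d) i : ℝ) := by
      push_cast
      linarith [hi.1]
    first
      | exact_mod_cast h'
      | exact_mod_cast this

lemma digitSet_bound {A : Matrix (Fin n) (Fin n) ℤ} {D : Set (Fin n → ℤ)}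
    (hA : IsDilation A) (hD : IsDigitSet A D) :
    ∃ M₀ : ℝ, 0 < M₀ ∧ ∀ d ∈ D, ‖castVec d‖ ≤ M₀ := by
  have hfin : ((fun d => ‖castVec d‖) '' D).Finite := (digitSet_finite hA hD).image _
  obtain ⟨M, hM⟩ := hfin.bddAbove
  refine ⟨max M 1, lt_of_lt_of_le one_pos (le_max_right _ _), fun d hd => ?_⟩
  exact le_trans (hM ⟨d, hd, rfl⟩) (le_max_left _ _)

/-- Applying `mulVec` to a `HasSum`. -/
lemma hasSum_mulVec {g : ℕ → (Fin n → ℝ)} {x : Fin n → ℝ} (Q : Matrix (Fin n) (Fin n) ℝ)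
    (h : HasSum g x) : HasSum (fun j => Q.mulVec (g j)) (Q.mulVec x) := by
  have := h.map (Matrix.mulVecLin Q).toAddMonoidHom
    (LinearMap.continuous_of_finiteDimensional (Matrix.mulVecLin Q))
  simpa [Function.comp_def] using this

/-- The tile is bounded. -/
lemma tile_bounded {A : Matrix (Fin n) (Fin n) ℤ} {D : Set (Fin n → ℤ)}
    (hA : IsDilation A) (hD : IsDigitSet A D) :
    ∃ R : ℝ, 0 < R ∧ ∀ t ∈ Tile A D, ‖t‖ ≤ R := by
  obtain ⟨C, ρ, hC, hρ0, hρ1, hC1, hpow⟩ := exists_pow_inv_bound hA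
  obtain ⟨M₀, hM₀, hMb⟩ := digitSet_bound hA hD
  have h1ρ : (0:ℝ) < 1 - ρ := by linarith
  have hRnn : (0:ℝ) ≤ C * M₀ * ρ * (1 - ρ)⁻¹ :=
    mul_nonneg (mul_nonneg (mul_nonneg hC.le hM₀.le) hρ0.le) (inv_nonneg.mpr h1ρ.le)
  refine ⟨C * M₀ * ρ * (1 - ρ)⁻¹ + 1, by linarith, fun t ht => ?_⟩
  obtain ⟨f, hf, hsum⟩ := ht
  set a : ℕ → (Fin n → ℝ) := fun j => ((realMat A)⁻¹ ^ (j + 1)).mulVec (castVec (f j)) with ha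
  have hbound : ∀ j, ‖a j‖ ≤ (C * M₀ * ρ) * ρ ^ j := by
    intro j
    calc ‖a j‖ ≤ ‖(realMat A)⁻¹ ^ (j+1)‖ * ‖castVec (f j)‖ := Matrix.linfty_opNorm_mulVec _ _
    _ ≤ (C * ρ ^ (j+1)) * M₀ := by
        exact mul_le_mul (hpow (j+1)) (hMb _ (hf j)) (norm_nonneg _)
          (mul_nonneg hC.le (pow_nonneg hρ0.le _))
    _ = (C * M₀ * ρ) * ρ ^ j := by ring
  have hsumm : Summable (fun j => ‖a j‖) := by
    apply Summable.of_nonneg_of_le (fun j => norm_nonneg _) hbound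
    exact (summable_geometric_of_lt_one hρ0.le hρ1).mul_left _
  have hteq : t = ∑' j, a j := hsum.tsum_eq.symm
  calc ‖t‖ = ‖∑' j, a j‖ := by rw [← hteq]
  _ ≤ ∑' j, ‖a j‖ := norm_tsum_le_tsum_norm hsumm
  _ ≤ ∑' j, (C * M₀ * ρ) * ρ ^ j := by
      apply Summable.tsum_le_tsum hbound hsumm
      exact (summable_geometric_of_lt_one hρ0.le hρ1).mul_left _
  _ = (C * M₀ * ρ) * (1 - ρ)⁻¹ := by
      rw [tsum_mul_left, tsum_geometric_of_lt_one hρ0.le hρ1]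
  _ ≤ C * M₀ * ρ * (1 - ρ)⁻¹ + 1 := by linarith

/-- Tail of an expansion: `t = p_k + B^k t'` with `t' ∈ T`. -/
lemma tile_tail {A : Matrix (Fin n) (Fin n) ℤ} {D : Set (Fin n → ℤ)}
    (hA : IsDilation A) {t : Fin n → ℝ} {f : ℕ → (Fin n → ℤ)}
    (hf : ∀ j, f j ∈ D)
    (ht : HasSum (fun j => ((realMat A)⁻¹ ^ (j + 1)).mulVec (castVec (f j))) t) (k : ℕ) :
    ∃ t' ∈ Tile A D,
      t = (∑ j ∈ Finset.range k, ((realMat A)⁻¹ ^ (j + 1)).mulVec (castVec (f j)))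
        + ((realMat A)⁻¹ ^ k).mulVec t' := by
  set B := (realMat A)⁻¹ with hB
  set a : ℕ → (Fin n → ℝ) := fun j => (B ^ (j + 1)).mulVec (castVec (f j)) with ha
  set p := ∑ j ∈ Finset.range k, a j with hp
  have htail : HasSum (fun j => a (j + k)) (t - p) := by
    rw [hasSum_nat_add_iff (f := a) k]
    simpa [hp] using ht
  have hAB : realMat A * B = 1 := mul_inv_realMat hA
  have hBA : B * realMat A = 1 := inv_mul_realMat hA
  have hpowAB : ∀ m : ℕ, (realMat A) ^ m * B ^ m = 1 := by
    intro m
    induction m with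
    | zero => simp
    | succ m ih =>
      have h5 : (realMat A) ^ (m+1) * B ^ (m+1)
          = (realMat A) ^ m * ((realMat A * B) * B ^ m) := by
        rw [pow_succ, pow_succ']
        simp only [mul_assoc]
      rw [h5, hAB, one_mul, ih]
  set t' : Fin n → ℝ := ((realMat A) ^ k).mulVec (t - p) with ht'
  have htsum : HasSum (fun j => (B ^ (j + 1)).mulVec (castVec (f (j + k)))) t' := by
    have h2 : ∀ j, a (j + k) = (B ^ k).mulVec ((B ^ (j + 1)).mulVec (castVec (f (j + k)))) := by
      intro j
      rw [ha]
      simp only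
      rw [Matrix.mulVec_mulVec, ← pow_add,
        show k + (j + 1) = j + k + 1 from by omega]
    have h3 := hasSum_mulVec ((realMat A) ^ k) htail
    rw [ht']
    convert h3 using 2 with j
    rw [h2, Matrix.mulVec_mulVec, Matrix.mulVec_mulVec, hpowAB k, one_mul]
  refine ⟨t', ⟨fun j => f (j + k), fun j => hf _, htsum⟩, ?_⟩
  have h4 : (B ^ k).mulVec t' = t - p := by
    rw [ht', Matrix.mulVec_mulVec]
    have hba : ∀ m : ℕ, B ^ m * (realMat A) ^ m = 1 := by
      intro m
      induction m with
      | zero => simp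
      | succ m ih =>
        have h5 : B ^ (m+1) * (realMat A) ^ (m+1)
            = B ^ m * ((B * realMat A) * (realMat A) ^ m) := by
          rw [pow_succ, pow_succ']
          simp only [mul_assoc]
        rw [h5, hBA, one_mul, ih]
    rw [hba k, Matrix.one_mulVec]
  rw [h4]
  abel

/-- Grafting: prepending digits to a tile point stays in the tile. -/
lemma tile_graft {A : Matrix (Fin n) (Fin n) ℤ} {D : Set (Fin n → ℤ)}
    (hA : IsDilation A) {f : ℕ → (Fin n → ℤ)} (hf : ∀ j, f j ∈ D) (k : ℕ)
    {s : Fin n → ℝ} (hs : s ∈ Tile A D) :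
    (∑ j ∈ Finset.range k, ((realMat A)⁻¹ ^ (j + 1)).mulVec (castVec (f j)))
      + ((realMat A)⁻¹ ^ k).mulVec s ∈ Tile A D := by
  classical
  set B := (realMat A)⁻¹ with hB
  obtain ⟨e, he, hesum⟩ := hs
  set g : ℕ → (Fin n → ℤ) := fun j => if j < k then f j else e (j - k) with hgdef
  refine ⟨g, fun j => by by_cases h : j < k <;> simp [hgdef, h, hf j, he _], ?_⟩
  set a : ℕ → (Fin n → ℝ) := fun j => (B ^ (j + 1)).mulVec (castVec (g j)) with ha
  have hshift : HasSum (fun j => a (j + k)) ((B ^ k).mulVec s) := by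
    have h2 : ∀ j, a (j + k) = (B ^ k).mulVec ((B ^ (j + 1)).mulVec (castVec (e j))) := by
      intro j
      rw [ha]
      simp only [hgdef]
      rw [if_neg (by omega), Matrix.mulVec_mulVec, ← pow_add,
        show k + (j + 1) = j + k + 1 from by omega,
        show j + k - k = j from by omega]
    have h3 := hasSum_mulVec (B ^ k) hesum
    convert h3 using 2 with j
    rw [h2, Matrix.mulVec_mulVec]
  have := (hasSum_nat_add_iff (f := a) k).mp hshift
  have hpeq : ∑ i ∈ Finset.range k, a i
      = ∑ j ∈ Finset.range k, (B ^ (j + 1)).mulVec (castVec (f j)) := by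
    apply Finset.sum_congr rfl
    intro j hj
    rw [ha]
    simp only [hgdef]
    rw [if_pos (Finset.mem_range.mp hj)]
  rw [hpeq] at this
  simpa only [add_comm] using this

/-- The only lattice point in the tile is `0`. -/
lemma lattice_point_eq_zero {A : Matrix (Fin n) (Fin n) ℤ} {D : Set (Fin n → ℤ)}
    (hA : IsDilation A) (hD : IsDigitSet A D)
    (htile : TilesRn (Tile A D)) (hint : (0 : Fin n → ℝ) ∈ interior (Tile A D))
    (r : Fin n → ℤ) (hr : castVec r ∈ Tile A D) : r = 0 := by
  by_contra hrne
  obtain ⟨C, ρ, hC, hρ0, hρ1, hC1, hpow⟩ := exists_pow_inv_bound hA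
  obtain ⟨R, hR, hRb⟩ := tile_bounded hA hD
  obtain ⟨ε, hε, hball⟩ : ∃ ε > 0, ball (0 : Fin n → ℝ) ε ⊆ Tile A D :=
    Metric.mem_nhds_iff.mp (mem_interior_iff_mem_nhds.mp hint)
  obtain ⟨f, hf, hsum⟩ := hr
  obtain ⟨k, hk⟩ : ∃ k : ℕ, C * ρ ^ k * (ε + R) < ε := by
    have h2 : Tendsto (fun k : ℕ => C * ρ ^ k * (ε + R)) atTop (nhds 0) := by
      have h := tendsto_pow_atTop_nhds_zero_of_lt_one hρ0.le hρ1
      have := (h.const_mul C).mul_const (ε + R)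
      simpa using this
    exact (h2.eventually_lt_const hε).exists
  set B := (realMat A)⁻¹ with hB
  set p := ∑ j ∈ Finset.range k, (B ^ (j + 1)).mulVec (castVec (f j)) with hp
  obtain ⟨t', ht'T, ht'⟩ := tile_tail hA hf hsum k
  set U := (fun y => p + (B ^ k).mulVec y) '' (ball (0 : Fin n → ℝ) ε) with hU
  have hU1 : U ⊆ Tile A D := by
    rintro _ ⟨y, hy, rfl⟩
    exact tile_graft hA hf k (hball hy)
  have hU2 : U ⊆ (fun x => x + castVec r) '' Tile A D := by
    rintro _ ⟨y, hy, rfl⟩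
    refine ⟨p + (B ^ k).mulVec y - castVec r, hball ?_, by abel⟩
    rw [mem_ball, dist_zero_right]
    have heq : p + (B ^ k).mulVec y - castVec r = (B ^ k).mulVec (y - t') := by
      rw [ht', Matrix.mulVec_sub]
      abel
    rw [heq]
    have hyn : ‖y‖ < ε := by
      rw [mem_ball, dist_zero_right] at hy
      exact hy
    calc ‖(B ^ k).mulVec (y - t')‖ ≤ ‖B ^ k‖ * ‖y - t'‖ := Matrix.linfty_opNorm_mulVec _ _
    _ ≤ (C * ρ ^ k) * (ε + R) := by
        apply mul_le_mul (hpow k) _ (norm_nonneg _) (mul_nonneg hC.le (pow_nonneg hρ0.le _))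
        calc ‖y - t'‖ ≤ ‖y‖ + ‖t'‖ := norm_sub_le _ _
        _ ≤ ε + R := add_le_add hyn.le (hRb _ ht'T)
    _ < ε := hk
  have hUvol : volume U ≠ 0 := by
    have hdet : ((B : Matrix (Fin n) (Fin n) ℝ) ^ k).det ≠ 0 := by
      rw [Matrix.det_pow, hB, Matrix.det_nonsing_inv, Ring.inverse_eq_inv]
      exact pow_ne_zero _ (inv_ne_zero (det_realMat_ne_zero hA))
    have him : U = (fun z => p + z) '' ((Matrix.toLin' (B ^ k)) '' (ball 0 ε)) := by
      rw [hU, Set.image_image]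
      apply Set.image_congr
      intro y _
      rw [Matrix.toLin'_apply]
    rw [him, Set.image_add_left, measure_preimage_add,
      MeasureTheory.Measure.addHaar_image_linearMap volume ((Matrix.toLin' (B ^ k)) :
        (Fin n → ℝ) →ₗ[ℝ] (Fin n → ℝ)), LinearMap.det_toLin']
    apply mul_ne_zero
    · simp only [ne_eq, ENNReal.ofReal_eq_zero, not_le]
      exact abs_pos.mpr hdet
    · exact (measure_ball_pos volume _ hε).ne'
  apply hUvol
  have h0r : (0 : Fin n → ℤ) ≠ r := fun h => hrne h.symm
  have hzero := htile.2 0 r h0r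
  have hT0 : (fun x => x + castVec (0 : Fin n → ℤ)) '' Tile A D = Tile A D := by
    rw [castVec_zero]
    simp
  rw [hT0] at hzero
  exact measure_mono_null (Set.subset_inter hU1 hU2) hzero

lemma pow_mul_inv_pow {A : Matrix (Fin n) (Fin n) ℤ} (hA : IsDilation A) (m : ℕ) :
    (realMat A) ^ m * (realMat A)⁻¹ ^ m = 1 := by
  induction m with
  | zero => simp
  | succ m ih =>
    have h5 : (realMat A) ^ (m+1) * (realMat A)⁻¹ ^ (m+1)
        = (realMat A) ^ m * ((realMat A * (realMat A)⁻¹) * (realMat A)⁻¹ ^ m) := by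
      rw [pow_succ, pow_succ']
      simp only [mul_assoc]
    rw [h5, mul_inv_realMat hA, one_mul, ih]

end Radix13

/-- if `T(A,D)` tiles `ℝ^n` by `ℤ^n`-translations and `0 ∈ T°`,
then `A` yields a radix representation with digit set `D`. -/
theorem stmt_13 {n : ℕ} (A : Matrix (Fin n) (Fin n) ℤ) (D : Set (Fin n → ℤ))
    (hA : IsDilation A) (hD : IsDigitSet A D) (h0 : (0 : Fin n → ℤ) ∈ D)
    (htile : TilesRn (Tile A D)) (hint : (0 : Fin n → ℝ) ∈ interior (Tile A D)) :
    YieldsRadix A D := by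
  intro x
  obtain ⟨C, ρ, hC, hρ0, hρ1, hC1, hpow⟩ := Radix13.exists_pow_inv_bound hA
  obtain ⟨ε, hε, hball⟩ : ∃ ε > 0, Metric.ball (0 : Fin n → ℝ) ε ⊆ Tile A D :=
    Metric.mem_nhds_iff.mp (mem_interior_iff_mem_nhds.mp hint)
  set B := (realMat A)⁻¹ with hB
  obtain ⟨k, hk1, hk⟩ : ∃ k : ℕ, 1 ≤ k ∧ C * ρ ^ k * (‖castVec x‖ + 1) < ε := by
    have h2 : Filter.Tendsto (fun k : ℕ => C * ρ ^ k * (‖castVec x‖ + 1))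
        Filter.atTop (nhds 0) := by
      have h := tendsto_pow_atTop_nhds_zero_of_lt_one hρ0.le hρ1
      have := (h.const_mul C).mul_const (‖castVec x‖ + 1)
      simpa using this
    obtain ⟨k, h4, h5⟩ := ((h2.eventually_lt_const hε).and (Filter.eventually_ge_atTop 1)).exists
    exact ⟨k, h5, h4⟩
  have hxT : (B ^ k).mulVec (castVec x) ∈ Tile A D := by
    apply hball
    rw [Metric.mem_ball, dist_zero_right]
    calc ‖(B ^ k).mulVec (castVec x)‖ ≤ ‖B ^ k‖ * ‖castVec x‖ := Matrix.linfty_opNorm_mulVec _ _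
    _ ≤ (C * ρ ^ k) * (‖castVec x‖ + 1) :=
        mul_le_mul (hpow k) (by linarith [norm_nonneg (castVec x)]) (norm_nonneg _)
          (mul_nonneg hC.le (pow_nonneg hρ0.le _))
    _ < ε := hk
  obtain ⟨f, hf, hsum⟩ := hxT
  obtain ⟨t', ht'T, ht'⟩ := Radix13.tile_tail hA hf hsum k
  have hkey : castVec x
      = (∑ j ∈ Finset.range k, ((realMat A) ^ (k - 1 - j)).mulVec (castVec (f j))) + t' := by
    have h6 := congrArg (fun v => ((realMat A) ^ k).mulVec v) ht'
    simp only [Matrix.mulVec_add, Matrix.mulVec_mulVec, hB, Radix13.pow_mul_inv_pow hA k,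
      Matrix.one_mulVec] at h6
    rw [h6]
    congr 1
    have hdist : ((realMat A) ^ k).mulVec
        (∑ j ∈ Finset.range k, (B ^ (j + 1)).mulVec (castVec (f j)))
        = ∑ j ∈ Finset.range k, ((realMat A) ^ k).mulVec ((B ^ (j + 1)).mulVec (castVec (f j))) := by
      show ((realMat A) ^ k).mulVecLin _ = _
      rw [map_sum]
      rfl
    rw [hdist]
    apply Finset.sum_congr rfl
    intro j hj
    have hjk := Finset.mem_range.mp hj
    rw [Matrix.mulVec_mulVec]
    congr 1
    have hsplit : (realMat A) ^ k = (realMat A) ^ (k - 1 - j) * (realMat A) ^ (j + 1) := by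
      rw [← pow_add]
      congr 1
      omega
    rw [hsplit, mul_assoc, Radix13.pow_mul_inv_pow hA (j + 1), mul_one]
  set r : Fin n → ℤ := x - ∑ j ∈ Finset.range k, (A ^ (k - 1 - j)).mulVec (f j) with hr
  have hrT : castVec r ∈ Tile A D := by
    have hct : castVec r = t' := by
      rw [hr, Radix13.castVec_sub, Radix13.castVec_sum]
      rw [Finset.sum_congr rfl (fun j _ => Radix13.castVec_pow_mulVec A (k - 1 - j) (f j))]
      rw [hkey]
      abel
    rw [hct]
    exact ht'T
  have hr0 : r = 0 := Radix13.lattice_point_eq_zero hA hD htile hint r hrT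
  have hx : x = ∑ j ∈ Finset.range k, (A ^ (k - 1 - j)).mulVec (f j) := by
    have h7 : x - ∑ j ∈ Finset.range k, (A ^ (k - 1 - j)).mulVec (f j) = 0 := by
      rw [← hr, hr0]
    exact sub_eq_zero.mp h7
  refine ⟨k - 1, fun j => f (k - 1 - j), fun j _ => hf _, ?_⟩
  have hre := Finset.sum_range_reflect (fun j => (A ^ j).mulVec (f (k - 1 - j))) k
  rw [show k - 1 + 1 = k from Nat.sub_add_cancel hk1, ← hre, hx]
  apply Finset.sum_congr rfl
  intro j hj
  have hjk := Finset.mem_range.mp hj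
  rw [show k - 1 - (k - 1 - j) = j from by omega]
end

section
/- Let A be a dilation matrix, D a digit set containing 0, and suppose T = T(A,D) tiles ℝ^n under translation by ℤ^n. Then for every k ≥ 1, D_{A,k} ⊇ A^k(T°) ∩ ℤ^n, where T° is the interior of T and D_{A,k} = { Σ_{j=0}^{k-1} A^j d_j : d_j ∈ D }. -/
open MeasureTheory Set

namespace S16
variable {n : ℕ} (A : Matrix (Fin n) (Fin n) ℤ) (D : Set (Fin n → ℤ))

lemma castVec_add (a b : Fin n → ℤ) : castVec (a + b) = castVec a + castVec b := by
  funext i; simp [castVec]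

lemma castVec_zero : castVec (0 : Fin n → ℤ) = 0 := by funext i; simp [castVec]

lemma castVec_inj {a b : Fin n → ℤ} (h : castVec a = castVec b) : a = b := by
  funext i; have := congrFun h i
  simpa [castVec] using this

lemma realMat_pow (m : ℕ) : realMat (A ^ m) = (realMat A) ^ m := by
  show (Int.castRingHom ℝ).mapMatrix (A ^ m) = _
  rw [map_pow]; rfl

lemma castVec_mulVec (m : ℕ) (v : Fin n → ℤ) :
    castVec ((A ^ m).mulVec v) = ((realMat A) ^ m).mulVec (castVec v) := by
  funext i
  rw [← realMat_pow]
  exact RingHom.map_mulVec (Int.castRingHom ℝ) (A ^ m) v i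

lemma det_ne_zero (hA : IsDilation A) : ((A.det : ℝ)) ≠ 0 := by
  intro h
  have hz : (A.det : ℤ) = 0 := by exact_mod_cast h
  have hnu : ¬ IsUnit (A.map (Int.cast : ℤ → ℂ)) := by
    rw [Matrix.isUnit_iff_isUnit_det]
    have : (A.map (Int.cast : ℤ → ℂ)).det = ((A.det : ℤ) : ℂ) :=
      (RingHom.map_det (Int.castRingHom ℂ) A).symm
    rw [this, hz]
    simp
  have := hA 0 ((spectrum.zero_mem_iff ℂ).mpr hnu)
  norm_num at this

lemma isUnit_realMat (hA : IsDilation A) : IsUnit (realMat A) := by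
  rw [Matrix.isUnit_iff_isUnit_det]
  have : (realMat A).det = ((A.det : ℤ) : ℝ) := (RingHom.map_det (Int.castRingHom ℝ) A).symm
  rw [this]
  exact isUnit_iff_ne_zero.mpr (det_ne_zero A hA)



noncomputable def mulVecCLM (M : Matrix (Fin n) (Fin n) ℝ) : (Fin n → ℝ) →L[ℝ] (Fin n → ℝ) :=
  LinearMap.toContinuousLinearMap (Matrix.mulVecLin M)

lemma mulVecCLM_apply (M : Matrix (Fin n) (Fin n) ℝ) (v : Fin n → ℝ) :
    mulVecCLM M v = M.mulVec v := rfl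

lemma zero_mem_Tile (h0 : (0 : Fin n → ℤ) ∈ D) : (0 : Fin n → ℝ) ∈ Tile A D := by
  refine ⟨fun _ => 0, fun _ => h0, ?_⟩
  have h : (fun j : ℕ => ((realMat A)⁻¹ ^ (j + 1)).mulVec (castVec (0 : Fin n → ℤ)))
      = fun _ => (0 : Fin n → ℝ) := by
    funext j; rw [castVec_zero, Matrix.mulVec_zero]
  rw [h]
  exact hasSum_zero

lemma subdiv {z : Fin n → ℝ} (hz : z ∈ Tile A D) {d : Fin n → ℤ} (hd : d ∈ D) :
    ((realMat A)⁻¹).mulVec (castVec d + z) ∈ Tile A D := by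
  obtain ⟨f, hf, hsum⟩ := hz
  set B := realMat A with hB
  set g : ℕ → (Fin n → ℤ) := fun j => Nat.casesOn j d f with hg
  set h : ℕ → (Fin n → ℝ) := fun j => (B⁻¹ ^ (j + 1)).mulVec (castVec (g j)) with hh
  refine ⟨g, fun j => by cases j <;> simp [hg, hd, hf], ?_⟩
  have h1 : HasSum (fun j => (B⁻¹).mulVec ((B⁻¹ ^ (j + 1)).mulVec (castVec (f j))))
      ((B⁻¹).mulVec z) := by
    simpa only [mulVecCLM_apply, map_add] using (mulVecCLM B⁻¹).hasSum hsum
  have heq : (fun j => h (j + 1))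
      = fun j => (B⁻¹).mulVec ((B⁻¹ ^ (j + 1)).mulVec (castVec (f j))) := by
    funext j
    rw [Matrix.mulVec_mulVec, ← pow_succ']
  have h2 : HasSum h ((B⁻¹).mulVec z + ∑ i ∈ Finset.range 1, h i) :=
    (hasSum_nat_add_iff 1).mp (heq ▸ h1)
  have h3 : (B⁻¹).mulVec z + ∑ i ∈ Finset.range 1, h i
      = (B⁻¹).mulVec (castVec d + z) := by
    rw [Finset.sum_range_one, Matrix.mulVec_add]
    simp [hh, hg, add_comm]
  rwa [h3] at h2

lemma contract_mem (h0 : (0 : Fin n → ℤ) ∈ D) (j : ℕ) :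
    ∀ {z : Fin n → ℝ}, z ∈ Tile A D → ((realMat A)⁻¹ ^ j).mulVec z ∈ Tile A D := by
  induction j with
  | zero => intro z hz; simpa using hz
  | succ j ih =>
      intro z hz
      have h1 : ((realMat A)⁻¹).mulVec z ∈ Tile A D := by
        have h2 := subdiv A D hz h0
        rwa [castVec_zero, zero_add] at h2
      have h2 := ih h1
      rwa [Matrix.mulVec_mulVec, ← pow_succ] at h2

lemma castVec_sum {ι : Type} (t : Finset ι) (v : ι → (Fin n → ℤ)) :
    castVec (∑ i ∈ t, v i) = ∑ i ∈ t, castVec (v i) := by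
  funext j
  simp only [castVec, Finset.sum_apply]
  push_cast
  rfl

lemma pow_mul_inv_pow (hA : IsDilation A) (m : ℕ) :
    (realMat A) ^ m * (realMat A)⁻¹ ^ m = 1 := by
  have hdet : IsUnit (realMat A).det := (Matrix.isUnit_iff_isUnit_det _).mp (isUnit_realMat A hA)
  induction m with
  | zero => simp
  | succ m ih =>
      rw [pow_succ, pow_succ', mul_assoc, ← mul_assoc (realMat A),
        Matrix.mul_nonsing_inv _ hdet, one_mul, ih]

lemma decomp (hA : IsDilation A) (k : ℕ) {z : Fin n → ℝ} (hz : z ∈ Tile A D) :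
    ∃ s ∈ DAk A D k, ∃ w ∈ Tile A D, ((realMat A) ^ k).mulVec z = castVec s + w := by
  obtain ⟨f, hf, hsum⟩ := hz
  set B := realMat A with hB
  have key : ∀ j : ℕ, B ^ k * B⁻¹ ^ (j + k + 1) = B⁻¹ ^ (j + 1) := by
    intro j
    have e : B⁻¹ ^ (j + k + 1) = B⁻¹ ^ k * B⁻¹ ^ (j + 1) := by
      rw [← pow_add]
      congr 1
      omega
    rw [e, ← mul_assoc, pow_mul_inv_pow A hA k, one_mul]
  have key2 : ∀ j < k, B ^ k * B⁻¹ ^ (j + 1) = B ^ (k - 1 - j) := by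
    intro j hj
    have hk' : k = (k - 1 - j) + (j + 1) := by omega
    calc B ^ k * B⁻¹ ^ (j + 1) = B ^ (k - 1 - j) * (B ^ (j + 1) * B⁻¹ ^ (j + 1)) := by
          rw [← mul_assoc, ← pow_add, ← hk']
      _ = B ^ (k - 1 - j) := by rw [pow_mul_inv_pow A hA, mul_one]
  have h1 : HasSum (fun j => (B ^ k * B⁻¹ ^ (j + 1)).mulVec (castVec (f j)))
      ((B ^ k).mulVec z) := by
    have h := (mulVecCLM (B ^ k)).hasSum hsum
    simpa only [mulVecCLM_apply, Matrix.mulVec_mulVec] using h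
  set G : ℕ → (Fin n → ℝ) := fun j => (B ^ k * B⁻¹ ^ (j + 1)).mulVec (castVec (f j)) with hG
  set w : Fin n → ℝ := (B ^ k).mulVec z - ∑ j ∈ Finset.range k, G j with hw
  have h2 : HasSum (fun j => G (j + k)) w := by
    rw [hasSum_nat_add_iff k, hw, sub_add_cancel]
    exact h1
  have hwT : w ∈ Tile A D := by
    refine ⟨fun j => f (j + k), fun j => hf _, ?_⟩
    have e : (fun j => G (j + k)) = fun j => (B⁻¹ ^ (j + 1)).mulVec (castVec (f (j + k))) := by
      funext j
      show (B ^ k * B⁻¹ ^ (j + k + 1)).mulVec (castVec (f (j + k))) = _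
      rw [key]
    rw [← e]
    exact h2
  set s : Fin n → ℤ := ∑ j ∈ Finset.range k, (A ^ j).mulVec (f (k - 1 - j)) with hs
  have hsD : s ∈ DAk A D k := ⟨fun j => f (k - 1 - j), fun j _ => hf _, hs⟩
  have hcast : castVec s = ∑ j ∈ Finset.range k, G j := by
    rw [hs, castVec_sum]
    have e1 : ∀ j ∈ Finset.range k, castVec ((A ^ j).mulVec (f (k - 1 - j)))
        = (B ^ j).mulVec (castVec (f (k - 1 - j))) := fun j _ => castVec_mulVec A j _
    rw [Finset.sum_congr rfl e1]
    have e2 : ∀ j ∈ Finset.range k, G j = (B ^ (k - 1 - j)).mulVec (castVec (f j)) := by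
      intro j hj
      show (B ^ k * B⁻¹ ^ (j + 1)).mulVec (castVec (f j)) = _
      rw [key2 j (Finset.mem_range.mp hj)]
    rw [Finset.sum_congr rfl e2, ← Finset.sum_range_reflect]
    refine Finset.sum_congr rfl ?_
    intro j hj
    have hj' : j < k := Finset.mem_range.mp hj
    have e3 : k - 1 - (k - 1 - j) = j := by omega
    rw [e3]
  refine ⟨s, hsD, w, hwT, ?_⟩
  rw [hcast, hw]
  abel

section gelfand

attribute [local instance] Matrix.linftyOpNormedAddCommGroup Matrix.linftyOpNormedRing
  Matrix.linftyOpNormedAlgebra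

lemma complex_decay (M : Matrix (Fin n) (Fin n) ℂ)
    (hsp : ∀ μ ∈ spectrum ℂ M, ‖μ‖₊ < 1) {ε : ℝ} (hε : 0 < ε) :
    ∃ m : ℕ, ∀ w : Fin n → ℂ, ‖(M ^ m).mulVec w‖ ≤ ε * ‖w‖ := by
  haveI : CompleteSpace (Matrix (Fin n) (Fin n) ℂ) := FiniteDimensional.complete ℂ _
  have hρ : spectralRadius ℂ M < 1 := by
    rcases (spectrum ℂ M).eq_empty_or_nonempty with he | hne
    · rw [spectralRadius, he]
      simp
    · obtain ⟨μ₀, hμ₀, hmax⟩ := Finset.exists_max_image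
        (Matrix.finite_spectrum M).toFinset (fun μ => ‖μ‖₊)
        (by simpa using hne)
      have h1 : spectralRadius ℂ M ≤ (‖μ₀‖₊ : ENNReal) := by
        refine iSup₂_le fun μ hμ => ?_
        exact_mod_cast ENNReal.coe_le_coe.mpr (hmax μ (by simpa using hμ))
      have h2 : (‖μ₀‖₊ : ENNReal) < 1 := by
        rw [← ENNReal.coe_one]
        exact_mod_cast hsp μ₀ (by simpa using hμ₀)
      exact lt_of_le_of_lt h1 h2
  obtain ⟨c, hc1, hc2⟩ := exists_between hρ
  have hgel := spectrum.pow_nnnorm_pow_one_div_tendsto_nhds_spectralRadius M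
  have hev : ∀ᶠ m : ℕ in Filter.atTop, (‖M ^ m‖₊ : ENNReal) ^ (1 / (m : ℝ)) < c :=
    hgel.eventually_lt_const hc1
  have hpow : ∀ᶠ m : ℕ in Filter.atTop, (‖M ^ m‖₊ : ENNReal) ≤ c ^ m := by
    filter_upwards [hev, Filter.eventually_ge_atTop 1] with m h1 h2
    have hm : (m : ℝ) ≠ 0 := by positivity
    have e : (‖M ^ m‖₊ : ENNReal) = ((‖M ^ m‖₊ : ENNReal) ^ (1 / (m : ℝ))) ^ m := by
      rw [← ENNReal.rpow_natCast (((‖M ^ m‖₊ : ENNReal)) ^ (1 / (m : ℝ))) m,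
        ← ENNReal.rpow_mul, one_div, inv_mul_cancel₀ hm, ENNReal.rpow_one]
    rw [e]
    exact pow_le_pow_left' h1.le m
  have htd : Filter.Tendsto (fun m : ℕ => c ^ m) Filter.atTop (nhds 0) :=
    ENNReal.tendsto_pow_atTop_nhds_zero_of_lt_one hc2
  have hsm : ∀ᶠ m : ℕ in Filter.atTop, (‖M ^ m‖₊ : ENNReal) < ENNReal.ofReal ε := by
    have h0 : (0 : ENNReal) < ENNReal.ofReal ε := ENNReal.ofReal_pos.mpr hε
    have := htd.eventually_lt_const h0
    filter_upwards [hpow, this] with m ha hb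
    exact lt_of_le_of_lt ha hb
  obtain ⟨m, hm⟩ := hsm.exists
  refine ⟨m, fun w => ?_⟩
  have hm' : ‖M ^ m‖₊ < ε.toNNReal := by
    rw [ENNReal.ofReal] at hm
    exact_mod_cast hm
  have hn : ‖M ^ m‖ ≤ ε :=
    calc ‖M ^ m‖ = (‖M ^ m‖₊ : ℝ) := rfl
      _ ≤ (ε.toNNReal : ℝ) := by exact_mod_cast hm'.le
      _ = ε := Real.coe_toNNReal ε hε.le
  calc ‖(M ^ m).mulVec w‖ ≤ ‖M ^ m‖ * ‖w‖ := Matrix.linfty_opNorm_mulVec _ _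
    _ ≤ ε * ‖w‖ := mul_le_mul_of_nonneg_right hn (norm_nonneg w)

end gelfand

lemma realMat_map_ofReal : (realMat A).map Complex.ofReal = A.map (Int.cast : ℤ → ℂ) := by
  rw [realMat, Matrix.map_map]
  congr 1


lemma isUnit_det_realMat (hA : IsDilation A) : IsUnit (realMat A).det := by
  have e : (realMat A).det = ((A.det : ℤ) : ℝ) := (RingHom.map_det (Int.castRingHom ℝ) A).symm
  rw [e]
  exact isUnit_iff_ne_zero.mpr (det_ne_zero A hA)

lemma inv_map_ofReal (hA : IsDilation A) :
    (A.map (Int.cast : ℤ → ℂ))⁻¹ = (realMat A)⁻¹.map Complex.ofReal := by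
  apply Matrix.inv_eq_right_inv
  rw [← realMat_map_ofReal]
  have e : (realMat A).map Complex.ofReal * (realMat A)⁻¹.map Complex.ofReal
      = ((realMat A) * (realMat A)⁻¹).map Complex.ofReal :=
    (Matrix.map_mul (f := Complex.ofRealHom)).symm
  rw [e, Matrix.mul_nonsing_inv _ (isUnit_det_realMat A hA),
    Matrix.map_one _ Complex.ofReal_zero Complex.ofReal_one]

lemma spec_inv_lt (hA : IsDilation A) :
    ∀ μ ∈ spectrum ℂ ((A.map (Int.cast : ℤ → ℂ))⁻¹), ‖μ‖₊ < 1 := by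
  intro μ hμ
  have hzd : A.det ≠ 0 := by
    intro h
    exact det_ne_zero A hA (by rw [h]; norm_num)
  have hNu : IsUnit (A.map (Int.cast : ℤ → ℂ)) := by
    rw [Matrix.isUnit_iff_isUnit_det]
    have e : (A.map (Int.cast : ℤ → ℂ)).det = ((A.det : ℤ) : ℂ) :=
      (RingHom.map_det (Int.castRingHom ℂ) A).symm
    rw [e]
    refine isUnit_iff_ne_zero.mpr ?_
    exact_mod_cast hzd
  have hinv : (A.map (Int.cast : ℤ → ℂ))⁻¹ = ((hNu.unit⁻¹ : (Matrix (Fin n) (Fin n) ℂ)ˣ) :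
      Matrix (Fin n) (Fin n) ℂ) := by
    rw [Matrix.coe_units_inv, IsUnit.unit_spec]
  rw [hinv, ← spectrum.map_inv, Set.mem_inv, IsUnit.unit_spec] at hμ
  have h1 : 1 < ‖μ⁻¹‖ := hA _ hμ
  have hμ0 : μ ≠ 0 := by
    intro h
    rw [h] at h1
    exact absurd h1 (by norm_num)
  have hlt : ‖μ‖ < 1 := by
    rw [norm_inv] at h1
    have h2 : 0 < ‖μ‖ := norm_pos_iff.mpr hμ0
    have h3 : ‖μ‖ * ‖μ‖⁻¹ = 1 := mul_inv_cancel₀ h2.ne'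
    nlinarith [h3]
  exact_mod_cast hlt

lemma cast_vec_norm (v : Fin n → ℝ) : ‖(fun i => (v i : ℂ))‖ = ‖v‖ := by
  rw [Pi.norm_def, Pi.norm_def]
  congr 1
  exact Finset.sup_congr rfl fun i _ => Complex.nnnorm_real (v i)

lemma norm_decay (hA : IsDilation A) {ε R : ℝ} (hε : 0 < ε) (hR : 0 < R) :
    ∃ j : ℕ, ∀ v : Fin n → ℝ, ‖v‖ ≤ R → ‖((realMat A)⁻¹ ^ j).mulVec v‖ < ε := by
  obtain ⟨m, hm⟩ := complex_decay ((A.map (Int.cast : ℤ → ℂ))⁻¹) (spec_inv_lt A hA)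
      (show (0 : ℝ) < ε / (2 * R) by positivity)
  refine ⟨m, fun v hv => ?_⟩
  have e1 : (fun i => ((((realMat A)⁻¹ ^ m).mulVec v) i : ℂ))
      = (((A.map (Int.cast : ℤ → ℂ))⁻¹) ^ m).mulVec (fun i => (v i : ℂ)) := by
    rw [inv_map_ofReal A hA]
    have e : ((realMat A)⁻¹.map Complex.ofReal) ^ m = ((realMat A)⁻¹ ^ m).map Complex.ofReal := by
      show (Complex.ofRealHom.mapMatrix ((realMat A)⁻¹)) ^ m
        = Complex.ofRealHom.mapMatrix (((realMat A)⁻¹) ^ m)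
      rw [map_pow]
    rw [e]
    funext i
    exact RingHom.map_mulVec Complex.ofRealHom _ v i
  have e2 : ‖((realMat A)⁻¹ ^ m).mulVec v‖
      = ‖(((A.map (Int.cast : ℤ → ℂ))⁻¹) ^ m).mulVec (fun i => (v i : ℂ))‖ := by
    rw [← e1, cast_vec_norm]
  rw [e2]
  calc ‖(((A.map (Int.cast : ℤ → ℂ))⁻¹) ^ m).mulVec (fun i => (v i : ℂ))‖
      ≤ ε / (2 * R) * ‖(fun i => (v i : ℂ))‖ := hm _
    _ = ε / (2 * R) * ‖v‖ := by rw [cast_vec_norm]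
    _ ≤ ε / (2 * R) * R := mul_le_mul_of_nonneg_left hv (by positivity)
    _ < ε := by
        rw [div_mul_eq_mul_div, mul_comm]
        rw [div_lt_iff₀ (by positivity)]
        nlinarith

lemma vol_translate (c : Fin n → ℝ) (s : Set (Fin n → ℝ)) :
    volume ((fun x => x + c) '' s) = volume s := by
  have e : (fun x : Fin n → ℝ => x + c) '' s = (fun x => x + (-c)) ⁻¹' s := by
    ext y
    constructor
    · rintro ⟨x, hx, rfl⟩
      simpa [add_assoc] using hx
    · intro h
      exact ⟨y + -c, h, by show y + -c + c = y; rw [add_assoc, neg_add_cancel, add_zero]⟩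
  rw [e, measure_preimage_add_right]

lemma vol_linear (P : Matrix (Fin n) (Fin n) ℝ) (s : Set (Fin n → ℝ)) :
    volume ((fun v => P.mulVec v) '' s) = ENNReal.ofReal |P.det| * volume s := by
  have e : (fun v : Fin n → ℝ => P.mulVec v) = ⇑(Matrix.toLin' P) := by
    funext v
    rw [Matrix.toLin'_apply]
  rw [e, Measure.addHaar_image_linearMap (volume : Measure (Fin n → ℝ)) (Matrix.toLin' P) s,
    LinearMap.det_toLin']

lemma vol_Tile_ne_zero (htile : TilesRn (Tile A D)) : volume (Tile A D) ≠ 0 := by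
  intro h
  have h1 : (volume : Measure (Fin n → ℝ)) Set.univ
      ≤ ∑' k : Fin n → ℤ, volume ((fun x => x + castVec k) '' Tile A D) := by
    rw [← htile.1]
    exact measure_iUnion_le _
  rw [tsum_congr (fun k => by rw [vol_translate, h]), tsum_zero] at h1
  have h2 : 0 < (volume : Measure (Fin n → ℝ)) Set.univ :=
    isOpen_univ.measure_pos volume Set.univ_nonempty
  exact h2.ne' (le_antisymm h1 zero_le)

lemma exists_ball_pos (htile : TilesRn (Tile A D)) :
    ∃ R : ℕ, volume (Tile A D ∩ Metric.ball 0 ((R : ℝ) + 1)) ≠ 0 := by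
  by_contra hc
  push_neg at hc
  apply vol_Tile_ne_zero A D htile
  have hT : Tile A D = ⋃ R : ℕ, Tile A D ∩ Metric.ball 0 ((R : ℝ) + 1) := by
    ext z
    simp only [Set.mem_iUnion, Set.mem_inter_iff]
    constructor
    · intro hz
      obtain ⟨R, hR⟩ := exists_nat_gt ‖z‖
      exact ⟨R, hz, mem_ball_zero_iff.mpr (by linarith)⟩
    · rintro ⟨R, hz, _⟩
      exact hz
  rw [hT]
  refine le_antisymm ?_ zero_le
  calc (volume : Measure (Fin n → ℝ)) (⋃ R : ℕ, Tile A D ∩ Metric.ball 0 ((R : ℝ) + 1))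
      ≤ ∑' R : ℕ, volume (Tile A D ∩ Metric.ball 0 ((R : ℝ) + 1)) :=
        measure_iUnion_le fun R : ℕ => Tile A D ∩ Metric.ball 0 ((R : ℝ) + 1)
    _ = 0 := by
        rw [tsum_congr (fun R => hc R), tsum_zero]

lemma vol_near_zero (hA : IsDilation A) (h0 : (0 : Fin n → ℤ) ∈ D)
    (htile : TilesRn (Tile A D)) {ε : ℝ} (hε : 0 < ε) :
    volume (Tile A D ∩ Metric.ball 0 ε) ≠ 0 := by
  obtain ⟨R, hR⟩ := exists_ball_pos A D htile
  obtain ⟨j, hj⟩ := norm_decay A hA hε (show (0 : ℝ) < (R : ℝ) + 1 by positivity)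
  have hsub : (fun v => ((realMat A)⁻¹ ^ j).mulVec v) '' (Tile A D ∩ Metric.ball 0 ((R : ℝ) + 1))
      ⊆ Tile A D ∩ Metric.ball 0 ε := by
    rintro w ⟨v, ⟨hv1, hv2⟩, rfl⟩
    exact ⟨contract_mem A D h0 j hv1,
      mem_ball_zero_iff.mpr (hj v (mem_ball_zero_iff.mp hv2).le)⟩
  have hdet : ((realMat A)⁻¹ ^ j).det ≠ 0 := by
    have h1 := congrArg Matrix.det (pow_mul_inv_pow A hA j)
    rw [Matrix.det_mul, Matrix.det_one] at h1
    intro h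
    rw [h, mul_zero] at h1
    exact zero_ne_one h1
  intro hzero
  have hle : volume ((fun v => ((realMat A)⁻¹ ^ j).mulVec v) ''
      (Tile A D ∩ Metric.ball 0 ((R : ℝ) + 1))) ≤ volume (Tile A D ∩ Metric.ball 0 ε) :=
    measure_mono hsub
  rw [hzero, vol_linear] at hle
  have hlt : 0 < ENNReal.ofReal |((realMat A)⁻¹ ^ j).det|
      * volume (Tile A D ∩ Metric.ball 0 ((R : ℝ) + 1)) :=
    ENNReal.mul_pos (ENNReal.ofReal_pos.mpr (abs_pos.mpr hdet)).ne' hR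
  exact hlt.ne' (le_antisymm hle zero_le)

end S16

/-- if `T(A,D)` tiles `ℝ^n`, then every integer vector in
`A^k(T°)` lies in `D_{A,k}`. -/
theorem stmt_16 {n : ℕ} (A : Matrix (Fin n) (Fin n) ℤ) (D : Set (Fin n → ℤ))
    (hA : IsDilation A) (hD : IsDigitSet A D) (h0 : (0 : Fin n → ℤ) ∈ D)
    (htile : TilesRn (Tile A D)) (k : ℕ) (hk : 1 ≤ k) :
    ∀ x : Fin n → ℤ,
      castVec x ∈ (fun y => (realMat A ^ k).mulVec y) '' interior (Tile A D) →
      x ∈ DAk A D k := by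
  intro x hx
  by_contra hxD
  have hBkdet : IsUnit ((realMat A ^ k).det) := by
    rw [Matrix.det_pow]
    exact (S16.isUnit_det_realMat A hA).pow k
  have himg : (fun v => (realMat A ^ k).mulVec v) '' interior (Tile A D)
      = (fun v => ((realMat A ^ k)⁻¹).mulVec v) ⁻¹' interior (Tile A D) := by
    ext w
    constructor
    · rintro ⟨v, hv, rfl⟩
      show ((realMat A ^ k)⁻¹).mulVec ((realMat A ^ k).mulVec v) ∈ interior (Tile A D)
      rwa [Matrix.mulVec_mulVec, Matrix.nonsing_inv_mul _ hBkdet, Matrix.one_mulVec]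
    · intro hw
      refine ⟨((realMat A ^ k)⁻¹).mulVec w, hw, ?_⟩
      show (realMat A ^ k).mulVec (((realMat A ^ k)⁻¹).mulVec w) = w
      rw [Matrix.mulVec_mulVec, Matrix.mul_nonsing_inv _ hBkdet, Matrix.one_mulVec]
  have hopen : IsOpen ((fun v => (realMat A ^ k).mulVec v) '' interior (Tile A D)) := by
    rw [himg]
    exact IsOpen.preimage (S16.mulVecCLM ((realMat A ^ k)⁻¹)).continuous isOpen_interior
  obtain ⟨ε, hε, hball⟩ := Metric.isOpen_iff.mp hopen _ hx
  have hcover : (fun v => (realMat A ^ k).mulVec v) '' interior (Tile A D)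
      ⊆ ⋃ s ∈ DAk A D k, (fun u => u + castVec s) '' Tile A D := by
    rintro w ⟨v, hv, rfl⟩
    have hv' : v ∈ Tile A D := interior_subset hv
    obtain ⟨s, hs, w', hw', he⟩ := S16.decomp A D hA k hv'
    refine Set.mem_biUnion hs ⟨w', hw', ?_⟩
    show w' + castVec s = (realMat A ^ k).mulVec v
    rw [he, add_comm]
  have hpos : volume (Tile A D ∩ Metric.ball 0 ε) ≠ 0 :=
    S16.vol_near_zero A D hA h0 htile hε
  have hsub : (fun u => u + castVec x) '' (Tile A D ∩ Metric.ball 0 ε)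
      ⊆ Metric.ball (castVec x) ε ∩ ((fun u => u + castVec x) '' Tile A D) := by
    rintro w ⟨u, ⟨hu1, hu2⟩, rfl⟩
    constructor
    · rw [Metric.mem_ball, dist_eq_norm]
      simpa using mem_ball_zero_iff.mp hu2
    · exact ⟨u, hu1, rfl⟩
  have hnull : volume (Metric.ball (castVec x) ε ∩ ((fun u => u + castVec x) '' Tile A D)) = 0 := by
    have hsub2 : Metric.ball (castVec x) ε ∩ ((fun u => u + castVec x) '' Tile A D)
        ⊆ ⋃ s ∈ DAk A D k, (((fun u => u + castVec s) '' Tile A D)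
          ∩ ((fun u => u + castVec x) '' Tile A D)) := by
      rintro w ⟨hw1, hw2⟩
      obtain ⟨S, hS, hwS⟩ := Set.mem_iUnion₂.mp (hcover (hball hw1))
      exact Set.mem_iUnion₂.mpr ⟨S, hS, hwS, hw2⟩
    refine measure_mono_null hsub2 ?_
    rw [measure_biUnion_null_iff (Set.to_countable _)]
    intro s hs
    exact htile.2 s x (fun h => hxD (h ▸ hs))
  have hgt : 0 < volume (Metric.ball (castVec x) ε ∩ ((fun u => u + castVec x) '' Tile A D)) := by
    calc 0 < volume (Tile A D ∩ Metric.ball 0 ε) := pos_iff_ne_zero.mpr hpos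
      _ = volume ((fun u => u + castVec x) '' (Tile A D ∩ Metric.ball 0 ε)) :=
          (S16.vol_translate _ _).symm
      _ ≤ _ := measure_mono hsub
  exact absurd hnull hgt.ne'
end

section
/- Let A be the twin dragon matrix A = [[1,1],[-1,1]] with digit set D = {(0,0), (1,0)}. Then A does not yield a radix representation of ℤ²: the vector (0,-1) cannot be written as a finite sum Σ_{j=0}^{N} A^j d_j with d_j ∈ D. -/
open MeasureTheory Set

lemma stmt_17_aux : ∀ N : ℕ, ∀ d : ℕ → (Fin 2 → ℤ),
    (∀ j ≤ N, d j ∈ ({![0, 0], ![1, 0]} : Set (Fin 2 → ℤ))) →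
    ![0, -1] ≠ ∑ j ∈ Finset.range (N + 1),
      ((!![1, 1; -1, 1] : Matrix (Fin 2) (Fin 2) ℤ) ^ j).mulVec (d j) := by
  intro N
  induction N with
  | zero =>
    intro d hd heq
    have h := hd 0 le_rfl
    simp only [Set.mem_insert_iff, Set.mem_singleton_iff] at h
    rcases h with h | h <;>
    · simp only [zero_add, Finset.sum_range_one, pow_zero, Matrix.one_mulVec, h] at heq
      have := congrFun heq 1
      simp [Matrix.cons_val_one] at this
  | succ N ih =>
    intro d hd heq
    set A : Matrix (Fin 2) (Fin 2) ℤ := !![1, 1; -1, 1] with hA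
    rw [Finset.sum_range_succ'] at heq
    have hsum : ∑ j ∈ Finset.range (N + 1), (A ^ (j + 1)).mulVec (d (j + 1))
        = A.mulVec (∑ j ∈ Finset.range (N + 1), (A ^ j).mulVec (d (j + 1))) := by
      rw [← Matrix.mulVecLin_apply, map_sum]
      congr 1; funext j
      rw [Matrix.mulVecLin_apply, pow_succ', Matrix.mulVec_mulVec]
    rw [hsum] at heq
    set S : Fin 2 → ℤ := ∑ j ∈ Finset.range (N + 1), (A ^ j).mulVec (d (j + 1)) with hS
    have h0 := congrFun heq 0
    have h1 := congrFun heq 1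
    have hm0 : A.mulVec S 0 = S 0 + S 1 := by
      simp [hA, Matrix.mulVec, dotProduct, Fin.sum_univ_two]
    have hm1 : A.mulVec S 1 = -S 0 + S 1 := by
      simp [hA, Matrix.mulVec, dotProduct, Fin.sum_univ_two]
    have h := hd 0 (Nat.zero_le _)
    simp only [Set.mem_insert_iff, Set.mem_singleton_iff] at h
    rcases h with h | h <;>
      simp only [h, Pi.add_apply, hm0, hm1] at h0 h1 <;>
      simp [Matrix.cons_val_zero, Matrix.cons_val_one] at h0 h1
    · omega
    · have hS0 : S 0 = 0 := by omega
      have hS1 : S 1 = -1 := by omega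
      apply ih (fun j => d (j + 1)) (fun j hj => hd (j + 1) (by omega))
      rw [← hS]
      funext i
      fin_cases i
      · simp [hS0]
      · simp [hS1]

/-- the twin dragon matrix with digit set `{(0,0),(1,0)}` does not
yield a radix representation: `(0,-1)` has no finite expansion. -/
theorem stmt_17 :
    ¬ ∃ (N : ℕ) (d : ℕ → (Fin 2 → ℤ)),
        (∀ j ≤ N, d j ∈ ({![0, 0], ![1, 0]} : Set (Fin 2 → ℤ))) ∧
        ![0, -1] = ∑ j ∈ Finset.range (N + 1),
          ((!![1, 1; -1, 1] : Matrix (Fin 2) (Fin 2) ℤ) ^ j).mulVec (d j) := by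
  rintro ⟨N, d, hd, heq⟩
  exact stmt_17_aux N d hd heq
end
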